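/- Assume k ≥ 12, q ≥ 2 and α ≤ q^k are constants. Then with probability 1 − o(1/n) over the random k-SAT formula Φ with density α, the following holds for H_Φ = (V, E): for every subset E' ⊆ E of size |E'| ≤ 4^{−k}·α^{−1/2}·n and every sequence of hyperedges e_{i₁}, …, e_{i_ℓ} ∈ E ∖ E' with distinct indices such that, setting V_s = (⋃_{e ∈ E'} e) ∪ (⋃_{j=1}^{s−1} e_{i_j}), one has |e_{i_s} ∩ V_s| ≥ 6 for every s ∈ [ℓ], it holds that ℓ ≤ |E'|. -/

import Mathlib

open Filter

noncomputable section
namespace RCSP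

/-- The finset of elements of a finite type satisfying a (not necessarily decidable)
predicate. -/
def setFinset {γ : Type*} [Fintype γ] (P : γ → Prop) : Finset γ :=
  (Set.toFinite {x | P x}).toFinset

/-- The probability that a uniformly random element of the finite type `γ`
satisfies `P`. -/
def pr (γ : Type*) (P : γ → Prop) : ℝ :=
  (Nat.card {x : γ // P x} : ℝ) / (Nat.card γ : ℝ)

/-- Expectation of `g` under the uniform distribution on the finite type `γ`. -/
def expF {γ : Type*} [Fintype γ] (g : γ → ℝ) : ℝ :=
  (∑ x, g x) / (Fintype.card γ : ℝ)

/-! ### k-SAT formulas -/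

/-- A `k`-SAT formula with `n` Boolean variables and `m` clauses: each clause is a
`k`-tuple of literals, a literal being a variable together with a polarity. -/
abbrev Formula (k n m : ℕ) := Fin m → Fin k → Fin n × Bool

/-- The assignment `σ` satisfies the clause `c`. -/
def satClause {k n : ℕ} (σ : Fin n → Bool) (c : Fin k → Fin n × Bool) : Prop :=
  ∃ j, σ (c j).1 = (c j).2

/-- The assignment `σ` satisfies the formula `Φ`. -/
def sat {k n m : ℕ} (Φ : Formula k n m) (σ : Fin n → Bool) : Prop :=
  ∀ i, satClause σ (Φ i)

/-- `σ` satisfies every clause of `Φ` except possibly `c₀`. -/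
def satExcept {k n m : ℕ} (Φ : Formula k n m) (c₀ : Fin m) (σ : Fin n → Bool) : Prop :=
  ∀ i, i ≠ c₀ → satClause σ (Φ i)

/-- The set of solutions of `Φ`. -/
def sols {k n m : ℕ} (Φ : Formula k n m) : Finset (Fin n → Bool) :=
  setFinset (sat Φ)

/-- The set of solutions of `Φ` with the clause `c₀` removed. -/
def solsExcept {k n m : ℕ} (Φ : Formula k n m) (c₀ : Fin m) : Finset (Fin n → Bool) :=
  setFinset (satExcept Φ c₀)

/-- The set of variables of clause `i` of `Φ` (a hyperedge of the incidence hypergraph). -/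
def vbl {k n m : ℕ} (Φ : Formula k n m) (i : Fin m) : Finset (Fin n) :=
  Finset.univ.image fun j => (Φ i j).1

/-- The multiset of hyperedges of the incidence hypergraph of `Φ`. -/
def edgeMultiset {k n m : ℕ} (Φ : Formula k n m) : Multiset (Finset (Fin n)) :=
  (Finset.univ : Finset (Fin m)).val.map fun i => vbl Φ i

/-! ### Hypergraphs on `Fin n`, given as an indexed family of `m` hyperedges -/

variable {n m : ℕ}

/-- Degree of a vertex: the number of hyperedges containing it. -/
def deg (E : Fin m → Finset (Fin n)) (v : Fin n) : ℕ :=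
  Nat.card {i : Fin m // v ∈ E i}

/-- The line graph: two hyperedges are adjacent iff they intersect. -/
def lineGraph (E : Fin m → Finset (Fin n)) : SimpleGraph (Fin m) where
  Adj i j := i ≠ j ∧ (E i ∩ E j).Nonempty
  symm := by
    constructor
    rintro i j ⟨hne, x, hx⟩
    rw [Finset.mem_inter] at hx
    exact ⟨hne.symm, x, Finset.mem_inter.mpr ⟨hx.2, hx.1⟩⟩
  loopless := ⟨fun i h => h.1 rfl⟩

/-- A set of hyperedges is connected in the line graph. -/
def LineConnected (E : Fin m → Finset (Fin n)) (T : Finset (Fin m)) : Prop :=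
  ((lineGraph E).induce (T : Set (Fin m))).Connected

/-- Two vertices are adjacent iff some hyperedge contains both. -/
def vtxGraph (E : Fin m → Finset (Fin n)) : SimpleGraph (Fin n) where
  Adj u w := u ≠ w ∧ ∃ i, u ∈ E i ∧ w ∈ E i
  symm := by
    constructor
    rintro u w ⟨hne, i, h1, h2⟩
    exact ⟨hne.symm, i, h2, h1⟩
  loopless := ⟨fun u h => h.1 rfl⟩

/-- A set of vertices induces a connected sub-hypergraph. -/
def VtxConnected (E : Fin m → Finset (Fin n)) (V' : Finset (Fin n)) : Prop :=
  ((vtxGraph E).induce (V' : Set (Fin n))).Connected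

/-- The set of vertices at graph-theoretic distance at least `r` from `v`
(vertices not reachable from `v` are at infinite distance). -/
def farSet (E : Fin m → Finset (Fin n)) (v : Fin n) (r : ℕ) : Finset (Fin n) :=
  setFinset fun u => ¬ (vtxGraph E).Reachable u v ∨ r ≤ (vtxGraph E).dist u v

/-- The closed neighbourhood `Γ⁺` of a set of vertices. -/
def gammaPlus (E : Fin m → Finset (Fin n)) (V' : Finset (Fin n)) : Finset (Fin n) :=
  setFinset fun u => u ∈ V' ∨ ∃ w ∈ V', (vtxGraph E).Adj u w

/-- The high-degree vertices of `V'`: those of degree at least `p₁ · α`. -/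
def HD (E : Fin m → Finset (Fin n)) (p₁ α : ℝ) (V' : Finset (Fin n)) : Finset (Fin n) :=
  setFinset fun v => v ∈ V' ∧ p₁ * α ≤ (deg E v : ℝ)

/-- One step of the bad-vertices/bad-hyperedges closure: every hyperedge (not yet bad)
with more than `ε₁ · k` bad vertices becomes bad, together with all of its vertices. -/
def badStep (E : Fin m → Finset (Fin n)) (k : ℕ) (ε₁ : ℝ)
    (st : Finset (Fin n) × Finset (Fin m)) : Finset (Fin n) × Finset (Fin m) :=
  let newE : Finset (Fin m) :=
    setFinset fun i => i ∉ st.2 ∧ ε₁ * (k : ℝ) < ((E i ∩ st.1).card : ℝ)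
  (st.1 ∪ newE.biUnion E, st.2 ∪ newE)

/-- The set of bad vertices generated from `V₀`. -/
def Vbad (E : Fin m → Finset (Fin n)) (k : ℕ) (ε₁ p₁ α : ℝ)
    (V₀ : Finset (Fin n)) : Finset (Fin n) :=
  ((badStep E k ε₁)^[m] (HD E p₁ α V₀, ∅)).1

/-- The set of bad hyperedges generated from `V₀`. -/
def Ebad (E : Fin m → Finset (Fin n)) (k : ℕ) (ε₁ p₁ α : ℝ)
    (V₀ : Finset (Fin n)) : Finset (Fin m) :=
  ((badStep E k ε₁)^[m] (HD E p₁ α V₀, ∅)).2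

/-- `V'` is a union of connected components of the sub-hypergraph induced by `B`. -/
def UnionOfComponents (E : Fin m → Finset (Fin n)) (B V' : Finset (Fin n)) : Prop :=
  V' ⊆ B ∧ ∀ u w : (B : Set (Fin n)),
    ((vtxGraph E).induce (B : Set (Fin n))).Reachable u w → (↑u ∈ V' → ↑w ∈ V')

/-- A hypergraph (with `n` vertices and `m` hyperedges of size at most `k`)
is `(k, α, ε₁, ε₂, η, ρ, p₁, p₂)`-nice. -/
structure IsNice (E : Fin m → Finset (Fin n)) (k : ℕ) (α ε₁ ε₂ η ρ p₁ p₂ : ℝ) : Prop where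
  /-- every hyperedge has at most `k` vertices -/
  edge_card : ∀ i, (E i).card ≤ k
  /-- bounded maximum degree -/
  max_deg : ∀ v, (deg E v : ℝ) ≤ 4 * (k : ℝ) * α + 6 * Real.log n
  /-- `(η, ρ)`-edge expansion -/
  expansion : ∀ T : Finset (Fin m), (T.card : ℝ) ≤ ρ * (m : ℝ) →
    (1 - η) * (k : ℝ) * (T.card : ℝ) ≤ ((T.biUnion E).card : ℝ)
  /-- bounded neighbourhood growth -/
  growth : ∀ (i : Fin m) (ℓ : ℕ), 1 ≤ ℓ →
    (Nat.card {T : Finset (Fin m) // i ∈ T ∧ T.card = ℓ ∧ LineConnected E T} : ℝ)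
      ≤ (n : ℝ) ^ 3 * (p₂ * α) ^ ℓ
  /-- bounded number of bad vertices -/
  bad_vtx : ∀ V₀ : Finset (Fin n),
    ((Vbad E k ε₁ p₁ α V₀).card : ℝ) ≤ 4 * ε₁⁻¹ * ((HD E p₁ α V₀).card : ℝ)
  /-- bounded fraction of bad hyperedges -/
  bad_frac : ∀ T : Finset (Fin m), LineConnected E T → Real.log n ≤ (T.card : ℝ) →
    ((T ∩ Ebad E k ε₁ p₁ α Finset.univ).card : ℝ) ≤ ε₂ * (T.card : ℝ)
  /-- no large connected component of bad hyperedges -/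
  bad_comp : ∀ T : Finset (Fin m), T ⊆ Ebad E k ε₁ p₁ α Finset.univ →
    LineConnected E T → (T.card : ℝ) < Real.log n

/-- The main structural condition (Condition 3.1) for an atomic CSP over domain `[q]`
whose incidence hypergraph is `E`. -/
def MainCondition (E : Fin m → Finset (Fin n)) (k q : ℕ)
    (α ε₁ ε₂ η ρ p₁ p₂ : ℝ) : Prop :=
  IsNice E k α ε₁ ε₂ η ρ p₁ p₂ ∧
  30 ≤ k ∧ α ≤ (q : ℝ) ^ k ∧ 4 ≤ η * (k : ℝ) ∧
  Real.exp 1 * (ρ * (k : ℝ) * α) ^ η = 1 ∧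
  ε₁ = 2 * η ∧ p₁ = 6 * (k : ℝ) ^ 7 ∧
  ε₂ = 2 / ((k : ℝ) ^ 2 * (1 - η) * η) ∧
  p₂ = Real.exp 1 * (k : ℝ) ^ 2

/-! ### Atomic CSPs -/

/-- `σ` satisfies all the atomic constraints: constraint `i` has variable set `vb i` and
unique violating assignment `bd i` (restricted to `vb i`). -/
def CSPsat {n m q : ℕ} (vb : Fin m → Finset (Fin n)) (bd : Fin m → Fin n → Fin q)
    (σ : Fin n → Fin q) : Prop :=
  ∀ i, ∃ v ∈ vb i, σ v ≠ bd i v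

/-- `σ` satisfies all the atomic constraints except possibly `c₀`. -/
def CSPsatExcept {n m q : ℕ} (vb : Fin m → Finset (Fin n)) (bd : Fin m → Fin n → Fin q)
    (c₀ : Fin m) (σ : Fin n → Fin q) : Prop :=
  ∀ i, i ≠ c₀ → ∃ v ∈ vb i, σ v ≠ bd i v

/-- The set of satisfying assignments of the atomic CSP. -/
def CSPsols {n m q : ℕ} (vb : Fin m → Finset (Fin n)) (bd : Fin m → Fin n → Fin q) :
    Finset (Fin n → Fin q) :=
  setFinset (CSPsat vb bd)

/-- The set of satisfying assignments of the atomic CSP with constraint `c₀` removed. -/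
def CSPsolsExcept {n m q : ℕ} (vb : Fin m → Finset (Fin n)) (bd : Fin m → Fin n → Fin q)
    (c₀ : Fin m) : Finset (Fin n → Fin q) :=
  setFinset (CSPsatExcept vb bd c₀)

/-- Average of `g` over the uniform distribution on the solutions of `Φ`, with default
value `g dflt` if `Φ` is unsatisfiable. -/
def solAvgD {k n m : ℕ} (Φ : Formula k n m) (dflt : Fin n → Bool)
    (g : (Fin n → Bool) → ℝ) : ℝ :=
  if (sols Φ).Nonempty then (∑ σ ∈ sols Φ, g σ) / ((sols Φ).card : ℝ) else g dflt

/-- The fraction of variables assigned `true`. -/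
def trueFrac {n : ℕ} (σ : Fin n → Bool) : ℝ :=
  (Nat.card {v : Fin n // σ v = true} : ℝ) / (n : ℝ)

/-- The total variation distance between the joint law of `(σ v, σ|B̄(v,r))` and the
product of its two marginals, where `σ` is uniform over the solutions of `Φ`
(with the convention that this quantity is `0` if `Φ` is unsatisfiable). -/
def nonRecQty {k n m : ℕ} (Φ : Formula k n m) (v : Fin n) (r : ℕ) : ℝ :=
  (1 / 2) * ∑ b : Bool, ∑ τ : {x // x ∈ farSet (vbl Φ) v r} → Bool,
    |(Nat.card {σ : Fin n → Bool // sat Φ σ ∧ σ v = b ∧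
          ∀ u : {x // x ∈ farSet (vbl Φ) v r}, σ ↑u = τ u} : ℝ) /
        (Nat.card {σ : Fin n → Bool // sat Φ σ} : ℝ) -
      (Nat.card {σ : Fin n → Bool // sat Φ σ ∧ σ v = b} : ℝ) /
          (Nat.card {σ : Fin n → Bool // sat Φ σ} : ℝ) *
        ((Nat.card {σ : Fin n → Bool // sat Φ σ ∧
              ∀ u : {x // x ∈ farSet (vbl Φ) v r}, σ ↑u = τ u} : ℝ) /
          (Nat.card {σ : Fin n → Bool // sat Φ σ} : ℝ))|

section AuxiliaryLemmas
open Finset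
-- infra lemmas
lemma pr_nonneg {γ : Type*} (P : γ → Prop) : 0 ≤ pr γ P :=
  div_nonneg (Nat.cast_nonneg _) (Nat.cast_nonneg _)

lemma pr_eq_zero {γ : Type*} (P : γ → Prop) (h : ∀ x : γ, ¬ P x) : pr γ P = 0 := by
  have : IsEmpty {x : γ // P x} := ⟨fun y => h y.1 y.2⟩
  rw [pr, Nat.card_of_isEmpty]
  simp

lemma pr_eq (γ : Type*) [Fintype γ] (P : γ → Prop) [DecidablePred P] :
    pr γ P = ((Finset.univ.filter P).card : ℝ) / (Fintype.card γ : ℝ) := by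
  rw [pr, Nat.card_eq_fintype_card, Nat.card_eq_fintype_card, Fintype.card_subtype]

lemma pr_le_sum {γ : Type*} [Fintype γ] {ι : Type*} (I : Finset ι) (P : γ → Prop)
    (Q : ι → γ → Prop) (h : ∀ x, P x → ∃ i ∈ I, Q i x) :
    pr γ P ≤ ∑ i ∈ I, pr γ (Q i) := by
  classical
  rw [pr_eq]
  have hQ : ∀ i, pr γ (Q i) = ((Finset.univ.filter (Q i)).card : ℝ) / (Fintype.card γ : ℝ) :=
    fun i => pr_eq γ (Q i)
  simp only [hQ]
  rw [← Finset.sum_div]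
  rcases Nat.eq_zero_or_pos (Fintype.card γ) with hγ | hγ
  · simp [hγ]
  · rw [div_le_div_iff_of_pos_right (by exact_mod_cast hγ)]
    have hsub : Finset.univ.filter P ⊆ I.biUnion (fun i => Finset.univ.filter (Q i)) := by
      intro x hx
      rw [Finset.mem_filter] at hx
      obtain ⟨i, hiI, hQi⟩ := h x hx.2
      exact Finset.mem_biUnion.mpr ⟨i, hiI, Finset.mem_filter.mpr ⟨Finset.mem_univ _, hQi⟩⟩
    calc ((Finset.univ.filter P).card : ℝ)
        ≤ ((I.biUnion (fun i => Finset.univ.filter (Q i))).card : ℝ) := by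
          exact_mod_cast Finset.card_le_card hsub
      _ ≤ ∑ i ∈ I, ((Finset.univ.filter (Q i)).card : ℝ) := by
          exact_mod_cast Finset.card_biUnion_le

lemma card_vbl {k n m : ℕ} (Φ : Formula k n m) (i : Fin m) : (vbl Φ i).card ≤ k := by
  calc (vbl Φ i).card ≤ (Finset.univ : Finset (Fin k)).card := Finset.card_image_le
    _ = k := by simp

lemma cube_le : ∀ t : ℕ, (t + 1) ^ 3 ≤ 8 * 2 ^ t := by
  intro t
  induction t with
  | zero => norm_num
  | succ t ih =>
    rcases Nat.lt_or_ge t 3 with h | h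
    · interval_cases t <;> norm_num
    · have h2 : (t + 2) ^ 3 ≤ 2 * (t + 1) ^ 3 := by
        have ha : 3 * t ≤ t * t := Nat.mul_le_mul_right t h
        have hb : 3 * (t * t) ≤ t * (t * t) := Nat.mul_le_mul_right (t*t) h
        have h1 : 6 * t + 6 ≤ t ^ 3 := by
          have : t ^ 3 = t * (t * t) := by ring
          omega
        nlinarith [h1]
      calc (t + 1 + 1) ^ 3 ≤ 2 * (t + 1) ^ 3 := h2
        _ ≤ 2 * (8 * 2 ^ t) := by omega
        _ = 8 * 2 ^ (t + 1) := by ring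

lemma twelve_six_le : ∀ kk : ℕ, 3 ≤ kk → 12 * 6 ^ kk ≤ 16 ^ kk := by
  intro kk h
  induction kk with
  | zero => omega
  | succ j ih =>
    rcases Nat.lt_or_ge j 3 with h3 | h3
    · interval_cases j
      · omega
      · omega
      · norm_num
    · calc 12 * 6 ^ (j + 1) = 6 * (12 * 6 ^ j) := by ring
        _ ≤ 6 * 16 ^ j := by
            have := ih h3; omega
        _ ≤ 16 ^ (j + 1) := by
            have : 16 ^ (j+1) = 16 * 16 ^ j := by ring
            omega

lemma pow_self_div_factorial_le (j : ℕ) : ((j : ℝ)) ^ j / (Nat.factorial j : ℝ) ≤ Real.exp 1 ^ j := by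
  rw [Real.exp_one_pow]
  have h := Real.sum_le_exp_of_nonneg (x := (j : ℝ)) (by positivity) (j + 1)
  refine le_trans ?_ h
  have : ((j : ℝ)) ^ j / (Nat.factorial j : ℝ) = ∑ i ∈ Finset.range (j+1),
      (if i = j then ((j:ℝ))^i / (Nat.factorial i : ℝ) else 0) := by
    rw [Finset.sum_ite_eq' (Finset.range (j+1)) j]
    simp
  rw [this]
  apply Finset.sum_le_sum
  intro i _
  split
  · exact le_refl _
  · positivity


lemma card_pair_subtype {n : ℕ} (W : Finset (Fin n)) :
    Nat.card {x : Fin n × Bool // x.1 ∈ W} = W.card * 2 := by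
  have e : {x : Fin n × Bool // x.1 ∈ W} ≃ {v : Fin n // v ∈ W} × Bool :=
    { toFun := fun x => (⟨x.1.1, x.2⟩, x.1.2)
      invFun := fun y => ⟨(y.1.1, y.2), y.1.2⟩
      left_inv := by rintro ⟨⟨a, b⟩, h⟩; rfl
      right_inv := by rintro ⟨⟨a, h⟩, b⟩; rfl }
  rw [Nat.card_congr e, Nat.card_prod]
  simp [Nat.card_eq_fintype_card, Fintype.card_coe]

lemma prQ {k n m : ℕ} (hn : 0 < n) (S : Finset (Fin m)) (W : Finset (Fin n)) :
    pr (Formula k n m) (fun Φ => ∀ i ∈ S, ∀ j, (Φ i j).1 ∈ W)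
      ≤ ((W.card : ℝ) / (n : ℝ)) ^ (k * S.card) := by
  classical
  have hcoord : ∀ i : Fin m,
      Nat.card {c : Fin k → Fin n × Bool // i ∈ S → ∀ j, (c j).1 ∈ W}
        = if i ∈ S then (W.card * 2) ^ k else (n * 2) ^ k := by
    intro i
    by_cases hi : i ∈ S
    · rw [if_pos hi]
      have e1 : {c : Fin k → Fin n × Bool // i ∈ S → ∀ j, (c j).1 ∈ W}
          ≃ {c : Fin k → Fin n × Bool // ∀ j, (c j).1 ∈ W} :=
        Equiv.subtypeEquivRight (by intro c; simp [hi])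
      have e2 : {c : Fin k → Fin n × Bool // ∀ j, (c j).1 ∈ W}
          ≃ ∀ _ : Fin k, {x : Fin n × Bool // x.1 ∈ W} :=
        Equiv.subtypePiEquivPi (p := fun (_ : Fin k) (x : Fin n × Bool) => x.1 ∈ W)
      rw [Nat.card_congr e1, Nat.card_congr e2, Nat.card_pi]
      have hcp := card_pair_subtype (n := n) W
      rw [Nat.card_eq_fintype_card] at hcp
      simp [hcp]
    · rw [if_neg hi]
      rw [Nat.card_congr (Equiv.subtypeUnivEquiv (fun c h => absurd h hi)),
        Nat.card_eq_fintype_card]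
      simp [Fintype.card_fun, mul_comm]
  have hnum : Nat.card {Φ : Formula k n m // ∀ i ∈ S, ∀ j, (Φ i j).1 ∈ W}
      = ((W.card * 2) ^ k) ^ S.card * ((n * 2) ^ k) ^ (m - S.card) := by
    have e0 : {Φ : Formula k n m // ∀ i ∈ S, ∀ j, (Φ i j).1 ∈ W}
        ≃ ∀ i : Fin m, {c : Fin k → Fin n × Bool // i ∈ S → ∀ j, (c j).1 ∈ W} :=
      Equiv.subtypePiEquivPi
        (p := fun (i : Fin m) (c : Fin k → Fin n × Bool) => i ∈ S → ∀ j, (c j).1 ∈ W)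
    rw [Nat.card_congr e0, Nat.card_pi]
    rw [Finset.prod_congr rfl (fun i _ => hcoord i), Finset.prod_ite, Finset.prod_const,
      Finset.prod_const, Finset.filter_univ_mem]
    congr 2
    rw [Finset.filter_not, Finset.filter_univ_mem, Finset.card_sdiff_of_subset (Finset.subset_univ S)]
    simp
  have hden : Nat.card (Formula k n m) = ((n * 2) ^ k) ^ m := by
    rw [Nat.card_eq_fintype_card]
    simp [Fintype.card_fun, mul_comm]
  have hsm : S.card ≤ m := by
    simpa using Finset.card_le_univ S
  rw [pr, hnum, hden]
  push_cast
  apply le_of_eq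
  have hb : m = S.card + (m - S.card) := (Nat.add_sub_cancel' hsm).symm
  have hnn : (0:ℝ) < (n:ℝ) * 2 := by
    have : (0:ℝ) < (n:ℝ) := by exact_mod_cast hn
    linarith
  have hsplit : (((n:ℝ) * 2) ^ k) ^ m
      = (((n:ℝ) * 2) ^ k) ^ S.card * (((n:ℝ) * 2) ^ k) ^ (m - S.card) := by
    rw [← pow_add, ← hb]
  rw [hsplit, mul_div_mul_right _ _ (ne_of_gt (pow_pos (pow_pos hnn k) (m - S.card))),
    ← div_pow, ← div_pow, mul_div_mul_right _ _ (by norm_num : (2:ℝ) ≠ 0), ← pow_mul]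

lemma exists_witness {k n m : ℕ} (hk : 12 ≤ k) (Φ : Formula k n m)
    (E' : Finset (Fin m)) (ℓ : ℕ) (f : Fin ℓ → Fin m) (hinj : Function.Injective f)
    (havoid : ∀ s, f s ∉ E')
    (hpeel : ∀ s : Fin ℓ, 6 ≤ ((vbl Φ (f s)) ∩
        (E'.biUnion (vbl Φ) ∪
          (Finset.univ.filter fun j : Fin ℓ => j < s).biUnion fun j => vbl Φ (f j))).card)
    (hlt : E'.card < ℓ) :
    ∃ S : Finset (Fin m), S.card = 2 * E'.card + 1 ∧ ∃ U : Finset (Fin n),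
      U.card ≤ k * E'.card + (k - 6) * (E'.card + 1) ∧ ∀ i ∈ S, ∀ j, (Φ i j).1 ∈ U := by
  classical
  set t := E'.card with ht
  have key : ∀ r : ℕ, r ≤ t + 1 →
      ((E'.biUnion (vbl Φ) ∪
        (Finset.univ.filter fun j : Fin ℓ => j.val < r).biUnion fun j => vbl Φ (f j)).card
          ≤ k * t + (k - 6) * r) := by
    intro r
    induction r with
    | zero =>
      intro _
      have hempty : (Finset.univ.filter fun j : Fin ℓ => j.val < 0) = ∅ := by
        apply Finset.filter_false_of_mem; intro j _; omega
      rw [hempty]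
      simp only [Finset.biUnion_empty, Finset.union_empty, Nat.mul_zero, Nat.add_zero]
      calc (E'.biUnion (vbl Φ)).card ≤ ∑ i ∈ E', (vbl Φ i).card := Finset.card_biUnion_le
        _ ≤ ∑ _i ∈ E', k := Finset.sum_le_sum (fun i _ => card_vbl Φ i)
        _ = t * k := by rw [Finset.sum_const, smul_eq_mul]
        _ = k * t := Nat.mul_comm _ _
    | succ r ih =>
      intro hr
      have hrl : r < ℓ := by omega
      set s : Fin ℓ := ⟨r, hrl⟩ with hs
      have hfi : (Finset.univ.filter fun j : Fin ℓ => j.val < r + 1)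
          = insert s (Finset.univ.filter fun j : Fin ℓ => j.val < r) := by
        ext j
        simp only [Finset.mem_filter, Finset.mem_univ, true_and, Finset.mem_insert,
          Fin.ext_iff, hs]
        show j.val < r + 1 ↔ j.val = r ∨ j.val < r
        omega
      have holdpeel := hpeel s
      have holdfilter : (Finset.univ.filter fun j : Fin ℓ => j < s)
          = (Finset.univ.filter fun j : Fin ℓ => j.val < r) := by
        apply Finset.filter_congr; intro j _
        simp [Fin.lt_def, hs]
      rw [holdfilter] at holdpeel
      set A := E'.biUnion (vbl Φ) ∪
        (Finset.univ.filter fun j : Fin ℓ => j.val < r).biUnion fun j => vbl Φ (f j) with hA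
      set B := vbl Φ (f s) with hB
      have hnew : (E'.biUnion (vbl Φ) ∪
          (Finset.univ.filter fun j : Fin ℓ => j.val < r + 1).biUnion fun j => vbl Φ (f j))
            = B ∪ A := by
        rw [hfi, Finset.biUnion_insert, hA, hB]
        ext x
        simp only [Finset.mem_union]
        tauto
      rw [hnew]
      have hcard1 : (B \ A).card + A.card = (B ∪ A).card := Finset.card_sdiff_add_card B A
      have hcard2 : (B ∩ A).card + (B \ A).card = B.card := Finset.card_inter_add_card_sdiff B A
      have hBk : B.card ≤ k := card_vbl Φ (f s)
      have h6 : 6 ≤ (B ∩ A).card := holdpeel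
      have hih := ih (by omega)
      have hsd : (B \ A).card ≤ k - 6 := by omega
      have : (B ∪ A).card ≤ (k - 6) + (k * t + (k - 6) * r) := by omega
      calc (B ∪ A).card ≤ (k - 6) + (k * t + (k - 6) * r) := this
        _ = k * t + (k - 6) * (r + 1) := by ring
  have hfinal := key (t + 1) (le_refl _)
  refine ⟨E' ∪ (Finset.univ.filter fun j : Fin ℓ => j.val < t + 1).image f, ?_, ?_⟩
  · have hdisj : Disjoint E' ((Finset.univ.filter fun j : Fin ℓ => j.val < t + 1).image f) := by
      rw [Finset.disjoint_right]
      intro a ha haE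
      obtain ⟨j, _, rfl⟩ := Finset.mem_image.mp ha
      exact havoid j haE
    rw [Finset.card_union_of_disjoint hdisj,
      Finset.card_image_of_injective _ hinj]
    have hfil : (Finset.univ.filter fun j : Fin ℓ => j.val < t + 1)
        = Finset.map (Fin.castLEEmb (by omega : t + 1 ≤ ℓ)) Finset.univ := by
      ext j
      rw [Finset.mem_filter, Finset.mem_map]
      constructor
      · intro h
        exact ⟨⟨j.val, h.2⟩, Finset.mem_univ _, Fin.ext rfl⟩
      · rintro ⟨i, _, rfl⟩
        exact ⟨Finset.mem_univ _, by simpa using i.isLt⟩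
    rw [hfil, Finset.card_map]
    simp
    omega
  · refine ⟨_, hfinal, ?_⟩
    intro i hi j
    have hvbl : (Φ i j).1 ∈ vbl Φ i := Finset.mem_image_of_mem _ (Finset.mem_univ j)
    rcases Finset.mem_union.mp hi with hiE | hiF
    · exact Finset.mem_union_left _ (Finset.mem_biUnion.mpr ⟨i, hiE, hvbl⟩)
    · obtain ⟨j', hj', rfl⟩ := Finset.mem_image.mp hiF
      exact Finset.mem_union_right _ (Finset.mem_biUnion.mpr ⟨j', hj', hvbl⟩)

lemma t_prod_bound {k n t : ℕ} {α : ℝ} (hα : 0 < α)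
    (ht : (t:ℝ) ≤ ((4:ℝ)^k)⁻¹ * (Real.sqrt α)⁻¹ * n) :
    (t:ℝ) * ((4:ℝ)^k * Real.sqrt α) ≤ n := by
  have hpos : (0:ℝ) < (4:ℝ)^k * Real.sqrt α :=
    mul_pos (pow_pos (by norm_num) k) (Real.sqrt_pos.mpr hα)
  have heq : ((4:ℝ)^k)⁻¹ * (Real.sqrt α)⁻¹ * n = n / ((4:ℝ)^k * Real.sqrt α) := by
    field_simp
  rw [heq, le_div_iff₀ hpos] at ht
  exact ht

lemma t_sq_bound {k n t : ℕ} {α : ℝ} (hα : 0 < α)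
    (ht : (t:ℝ) ≤ ((4:ℝ)^k)⁻¹ * (Real.sqrt α)⁻¹ * n) :
    (t:ℝ)^2 * (16:ℝ)^k * α ≤ (n:ℝ)^2 := by
  have hprod := t_prod_bound hα ht
  have hsq : ((t:ℝ) * ((4:ℝ)^k * Real.sqrt α))^2 ≤ (n:ℝ)^2 :=
    pow_le_pow_left₀ (by positivity) hprod 2
  have hexp : ((t:ℝ) * ((4:ℝ)^k * Real.sqrt α))^2 = (t:ℝ)^2 * (16:ℝ)^k * α := by
    have h44 : ((4:ℝ)^k)^2 = (16:ℝ)^k := by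
      rw [← pow_mul, show (16:ℝ) = 4^2 by norm_num, ← pow_mul, mul_comm]
    rw [mul_pow, mul_pow, Real.sq_sqrt hα.le, h44]
    ring
  rwa [hexp] at hsq

lemma k_cube_le {k : ℕ} (hk : 1 ≤ k) : k^3 ≤ 4 * 2^k := by
  have h := cube_le (k - 1)
  have hik : k - 1 + 1 = k := by omega
  rw [hik] at h
  have h2 : 2^k = 2 * 2^(k-1) := by
    rw [← pow_succ']
    congr 1
    omega
  omega

lemma t_small {k n m t : ℕ} {α : ℝ} (hk : 12 ≤ k) (hα : 0 < α)
    (hm : (m:ℝ) ≤ α * n) (ht : (t:ℝ) ≤ ((4:ℝ)^k)⁻¹ * (Real.sqrt α)⁻¹ * n)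
    (hs : 2 * t + 1 ≤ m) : 8 * k * t ≤ n := by
  have hprod := t_prod_bound hα ht
  rcases le_or_gt 1 α with h1α | h1α
  · -- α ≥ 1 : t ≤ 4^{-k} n and 8k ≤ 4^k
    have hsqrt1 : (1:ℝ) ≤ Real.sqrt α := Real.one_le_sqrt.mpr h1α
    have ht4 : (t:ℝ) * (4:ℝ)^k ≤ n := by
      calc (t:ℝ) * (4:ℝ)^k ≤ (t:ℝ) * ((4:ℝ)^k * Real.sqrt α) := by
            rw [← mul_assoc]
            exact le_mul_of_one_le_right (by positivity) hsqrt1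
        _ ≤ n := hprod
    have h8k : 8 * k ≤ 4^k := by
      have hk2 : k < 2^k := (Nat.lt_two_pow_self (n := k))
      have h8 : 8 ≤ 2^k := by
        calc 8 = 2^3 := by norm_num
          _ ≤ 2^k := Nat.pow_le_pow_right (by norm_num) (by omega)
      calc 8 * k ≤ 8 * 2^k := by omega
        _ ≤ 2^k * 2^k := Nat.mul_le_mul_right _ h8
        _ = 4^k := by rw [← Nat.mul_pow]
    have : ((8 * k * t : ℕ) : ℝ) ≤ (n:ℝ) := by
      push_cast
      calc (8:ℝ) * k * t ≤ ((4:ℝ)^k) * t := by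
            have : ((8 * k : ℕ) : ℝ) ≤ (((4:ℕ)^k : ℕ) : ℝ) := by exact_mod_cast h8k
            push_cast at this
            nlinarith [this, Nat.cast_nonneg (α := ℝ) t]
        _ = (t:ℝ) * (4:ℝ)^k := by ring
        _ ≤ n := ht4
    exact_mod_cast this
  · -- α < 1 : use t ≤ m/2 ≤ αn/2 and cube
    have hsq := t_sq_bound hα ht
    have hm2 : 2 * (t:ℝ) ≤ α * n := by
      have : ((2 * t + 1 : ℕ) : ℝ) ≤ (m : ℝ) := by exact_mod_cast hs
      push_cast at this
      linarith
    have hmul := mul_le_mul hsq hm2 (by positivity) (by positivity)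
    have h3 : 2 * (t:ℝ)^3 * (16:ℝ)^k ≤ (n:ℝ)^3 := by
      have h2' : α * (2 * (t:ℝ)^3 * (16:ℝ)^k) ≤ α * (n:ℝ)^3 := by nlinarith [hmul]
      exact le_of_mul_le_mul_left h2' hα
    have h256 : 256 * k^3 ≤ 16^k := by
      have h1 := k_cube_le (by omega : 1 ≤ k)
      have h1024 : 1024 ≤ 8^k := by
        calc 1024 ≤ 8^4 := by norm_num
          _ ≤ 8^k := Nat.pow_le_pow_right (by norm_num) (by omega)
      calc 256 * k^3 ≤ 256 * (4 * 2^k) := Nat.mul_le_mul_left _ h1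
        _ = 1024 * 2^k := by ring
        _ ≤ 8^k * 2^k := Nat.mul_le_mul_right _ h1024
        _ = 16^k := by rw [← Nat.mul_pow]
    have h256' : (256:ℝ) * (k:ℝ)^3 ≤ (16:ℝ)^k := by
      have : ((256 * k^3 : ℕ):ℝ) ≤ (((16:ℕ)^k : ℕ):ℝ) := by exact_mod_cast h256
      push_cast at this
      linarith
    have hX : (0:ℝ) < (16:ℝ)^k := by positivity
    have hfin3 : 512 * (k:ℝ)^3 * (t:ℝ)^3 ≤ (n:ℝ)^3 := by
      have s1 : 512*(k:ℝ)^3 * (2*(t:ℝ)^3*(16:ℝ)^k) ≤ 512*(k:ℝ)^3 * (n:ℝ)^3 :=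
        mul_le_mul_of_nonneg_left h3 (by positivity)
      have s2 : 512*(k:ℝ)^3 * (n:ℝ)^3 ≤ 2*(16:ℝ)^k * (n:ℝ)^3 := by
        apply mul_le_mul_of_nonneg_right _ (by positivity)
        nlinarith [h256']
      have s3 : (2*(16:ℝ)^k) * (512*(k:ℝ)^3*(t:ℝ)^3) ≤ (2*(16:ℝ)^k) * (n:ℝ)^3 := by
        nlinarith [s1, s2]
      exact le_of_mul_le_mul_left s3 (by positivity)
    have hfinal : ((8 * k * t : ℕ):ℝ) ≤ (n:ℝ) := by
      have hpow : ((8 * k * t : ℕ):ℝ)^3 ≤ (n:ℝ)^3 := by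
        push_cast
        nlinarith [hfin3]
      exact le_of_pow_le_pow_left₀ (by norm_num) (Nat.cast_nonneg n) hpow
    exact_mod_cast hfinal

lemma numeric_k {k : ℕ} (hk : 12 ≤ k) :
    27 * (k:ℝ)^3 * Real.exp 1 ^ (k-2) ≤ (16:ℝ)^k := by
  have he3 : Real.exp 1 ≤ 3 := by nlinarith [Real.exp_one_lt_d9]
  have he : Real.exp 1 ^ (k-2) ≤ (3:ℝ)^(k-2) :=
    pow_le_pow_left₀ (Real.exp_pos 1).le he3 _
  have hnat : 27 * k^3 * 3^(k-2) ≤ 16^k := by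
    have h1 := k_cube_le (by omega : 1 ≤ k)
    have h2 : 27 * 3^(k-2) = 3^(k+1) := by
      rw [show (27:ℕ) = 3^3 by norm_num, ← pow_add]
      congr 1
      omega
    calc 27 * k^3 * 3^(k-2) = k^3 * (27 * 3^(k-2)) := by ring
      _ = k^3 * 3^(k+1) := by rw [h2]
      _ ≤ (4 * 2^k) * 3^(k+1) := Nat.mul_le_mul_right _ h1
      _ = 12 * 6^k := by
          rw [show (6:ℕ) = 2*3 by norm_num, Nat.mul_pow, pow_succ]
          ring
      _ ≤ 16^k := twelve_six_le k (by omega)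
  have hnat' : (27:ℝ) * (k:ℝ)^3 * (3:ℝ)^(k-2) ≤ (16:ℝ)^k := by
    have : ((27 * k^3 * 3^(k-2) : ℕ):ℝ) ≤ (((16:ℕ)^k : ℕ):ℝ) := by exact_mod_cast hnat
    push_cast at this
    linarith
  calc 27 * (k:ℝ)^3 * Real.exp 1 ^ (k-2) ≤ 27 * (k:ℝ)^3 * (3:ℝ)^(k-2) := by
        apply mul_le_mul_of_nonneg_left he (by positivity)
    _ ≤ (16:ℝ)^k := hnat'

set_option maxHeartbeats 1000000 in
lemma termBound {k n m t : ℕ} {α : ℝ} (hk : 12 ≤ k) (hα : 0 < α)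
    (hn : 1 ≤ n) (hm : (m:ℝ) ≤ α * n)
    (ht : (t:ℝ) ≤ ((4:ℝ)^k)⁻¹ * (Real.sqrt α)⁻¹ * n)
    (hB0 : Real.exp 1 ^ (k-2) * α * ((k:ℝ)-6)^3 * 2 ≤ (n:ℝ)^2) :
    (m.choose (2*t+1) : ℝ) * (n.choose (k*t+(k-6)*(t+1)) : ℝ)
        * (((k*t+(k-6)*(t+1) : ℕ):ℝ)/(n:ℝ))^(k*(2*t+1))
      ≤ (1/2:ℝ)^(2*t+1) * ((3*(k:ℝ)*((t:ℝ)+1))/(n:ℝ))^3 := by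
  have hn0 : (0:ℝ) < (n:ℝ) := by exact_mod_cast hn
  set s : ℕ := 2*t+1 with hs_def
  set w : ℕ := k*t+(k-6)*(t+1) with hw_def
  by_cases hsm : s ≤ m
  swap
  · rw [Nat.choose_eq_zero_of_lt (by omega)]
    simp only [Nat.cast_zero, zero_mul]
    positivity
  -- basic facts
  have hw0 : 0 < w := by
    have : 6 ≤ (k-6) * (t+1) := by
      calc 6 = 6 * 1 := by norm_num
        _ ≤ (k-6) * (t+1) := Nat.mul_le_mul (by omega) (by omega)
    omega
  have hs0 : 0 < s := by omega
  have hks : k * s = w + (6*t+6) := by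
    rw [hs_def, hw_def]
    zify [show 6 ≤ k by omega]
    ring
  have hwk3 : w ≤ (k-3) * s := by
    have : (k-3) * s = w + 3 := by
      rw [hs_def, hw_def]
      zify [show 6 ≤ k by omega, show 3 ≤ k by omega]
      ring
    omega
  have he1 : (1:ℝ) ≤ Real.exp 1 := by nlinarith [Real.exp_one_gt_d9]
  have hwr0 : (0:ℝ) ≤ (w:ℝ)/(n:ℝ) := by positivity
  -- Step 1: choose bounds
  have h1 : (m.choose s : ℝ) ≤ (m:ℝ)^s / (Nat.factorial s : ℝ) := Nat.choose_le_pow_div s m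
  have h2 : (n.choose w : ℝ) ≤ (n:ℝ)^w / (Nat.factorial w : ℝ) := Nat.choose_le_pow_div w n
  have step1 : (m.choose s : ℝ) * (n.choose w : ℝ) * ((w:ℝ)/(n:ℝ))^(k*s)
      ≤ ((m:ℝ)^s / (Nat.factorial s : ℝ)) * ((n:ℝ)^w / (Nat.factorial w : ℝ))
          * ((w:ℝ)/(n:ℝ))^(k*s) :=
    mul_le_mul_of_nonneg_right
      (mul_le_mul h1 h2 (Nat.cast_nonneg _) (by positivity)) (by positivity)
  -- Step 2: rearrange
  have e : ((n:ℝ))^w * ((w:ℝ)/(n:ℝ))^w = (w:ℝ)^w := by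
    rw [div_pow, mul_div_cancel₀]
    positivity
  have step2 : ((m:ℝ)^s / (Nat.factorial s : ℝ)) * ((n:ℝ)^w / (Nat.factorial w : ℝ))
        * ((w:ℝ)/(n:ℝ))^(k*s)
      = ((m:ℝ)^s / (Nat.factorial s : ℝ)) * ((w:ℝ)^w / (Nat.factorial w : ℝ))
        * ((w:ℝ)/(n:ℝ))^(6*t+6) := by
    rw [hks, pow_add, ← e]
    ring
  -- Step 3/4: factorial to exp bounds
  have h3 : (w:ℝ)^w / (Nat.factorial w : ℝ) ≤ Real.exp 1 ^ w := pow_self_div_factorial_le w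
  have h4 : Real.exp 1 ^ w ≤ Real.exp 1 ^ ((k-3)*s) := pow_le_pow_right₀ he1 hwk3
  have h5 : (m:ℝ)^s / (Nat.factorial s : ℝ) ≤ (Real.exp 1 * (m:ℝ) / (s:ℝ))^s := by
    have hss : ((s:ℝ))^s / (Nat.factorial s : ℝ) ≤ Real.exp 1 ^ s := pow_self_div_factorial_le s
    have hfact : (0:ℝ) < (Nat.factorial s : ℝ) := by exact_mod_cast Nat.factorial_pos s
    have hs0' : (0:ℝ) < (s:ℝ) := by exact_mod_cast hs0
    have hss' : ((s:ℝ))^s ≤ Real.exp 1 ^ s * (Nat.factorial s : ℝ) := by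
      rw [div_le_iff₀ hfact] at hss
      linarith
    rw [div_le_iff₀ hfact]
    have expand : (Real.exp 1 * (m:ℝ) / (s:ℝ))^s
        = Real.exp 1 ^ s * (m:ℝ)^s / ((s:ℝ))^s := by
      rw [div_pow, mul_pow]
    rw [expand, div_mul_eq_mul_div, le_div_iff₀ (by positivity)]
    calc (m:ℝ)^s * (s:ℝ)^s
        ≤ (m:ℝ)^s * (Real.exp 1 ^ s * (Nat.factorial s : ℝ)) :=
          mul_le_mul_of_nonneg_left hss' (by positivity)
      _ = Real.exp 1 ^ s * (m:ℝ)^s * (Nat.factorial s : ℝ) := by ring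
  have step3 : ((m:ℝ)^s / (Nat.factorial s : ℝ)) * ((w:ℝ)^w / (Nat.factorial w : ℝ))
        * ((w:ℝ)/(n:ℝ))^(6*t+6)
      ≤ (Real.exp 1 * (m:ℝ) / (s:ℝ))^s * Real.exp 1 ^ ((k-3)*s)
        * ((w:ℝ)/(n:ℝ))^(6*t+6) := by
    apply mul_le_mul_of_nonneg_right _ (by positivity)
    exact mul_le_mul h5 (h3.trans h4) (by positivity) (by positivity)
  -- Step 5: collect into B^s * (w/n)^3
  set B : ℝ := Real.exp 1 ^ (k-2) * ((m:ℝ)/(s:ℝ)) * ((w:ℝ)/(n:ℝ))^3 with hB_def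
  have hBnn : 0 ≤ B := by positivity
  have step4 : (Real.exp 1 * (m:ℝ) / (s:ℝ))^s * Real.exp 1 ^ ((k-3)*s)
        * ((w:ℝ)/(n:ℝ))^(6*t+6)
      = B^s * ((w:ℝ)/(n:ℝ))^3 := by
    have hexp62 : 6*t+6 = 3*s+3 := by omega
    have hk2 : Real.exp 1 ^ (k-2) = Real.exp 1 * Real.exp 1 ^ (k-3) := by
      rw [← pow_succ']
      congr 1
      omega
    rw [hexp62, pow_add, pow_mul, hB_def, hk2, pow_mul]
    rw [mul_div_assoc]
    ring
  -- Step 6: B ≤ 1/2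
  have hB : B ≤ 1/2 := by
    rcases Nat.eq_zero_or_pos t with ht0 | ht1
    · -- t = 0
      subst ht0
      have hw6 : ((w:ℕ):ℝ) = (k:ℝ) - 6 := by
        rw [hw_def]
        push_cast [show 6 ≤ k by omega]
        ring
      have hsval : ((s:ℕ):ℝ) = 1 := by rw [hs_def]; norm_num
      have hk6 : (0:ℝ) ≤ (k:ℝ) - 6 := by
        have : (12:ℝ) ≤ (k:ℝ) := by exact_mod_cast hk
        linarith
      rw [hB_def, hw6, hsval]
      have hmono : (m:ℝ)/1 ≤ α * n := by rw [div_one]; exact hm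
      calc Real.exp 1 ^ (k-2) * ((m:ℝ)/1) * (((k:ℝ)-6)/(n:ℝ))^3
          ≤ Real.exp 1 ^ (k-2) * (α * n) * (((k:ℝ)-6)/(n:ℝ))^3 := by
            gcongr
        _ = (Real.exp 1 ^ (k-2) * α * ((k:ℝ)-6)^3) / (n:ℝ)^2 := by
            rw [div_pow]
            field_simp
        _ ≤ 1/2 := by
            rw [div_le_iff₀ (by positivity)]
            linarith [hB0]
    · -- t ≥ 1
      have ht1' : (1:ℝ) ≤ (t:ℝ) := by exact_mod_cast ht1
      have hw3kt : (w:ℝ) ≤ 3*(k:ℝ)*(t:ℝ) := by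
        have hnat : w ≤ 3*k*t := by
          have hb1 : (k-6)*(t+1) ≤ (k-6)*(2*t) := Nat.mul_le_mul_left _ (by omega)
          have hb2 : (k-6)*(2*t) ≤ k*(2*t) := Nat.mul_le_mul_right _ (by omega)
          have hb3 : k*t + k*(2*t) = 3*k*t := by ring
          omega
        have := (Nat.cast_le (α := ℝ)).mpr hnat
        push_cast at this
        linarith
      have hms : (m:ℝ)/(s:ℝ) ≤ α*(n:ℝ)/(2*(t:ℝ)) := by
        apply div_le_div₀ (by positivity) hm (by positivity)
        have : ((2*t:ℕ):ℝ) ≤ ((s:ℕ):ℝ) := by exact_mod_cast (by omega : 2*t ≤ s)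
        push_cast at this ⊢
        linarith
      have hsq := t_sq_bound (t := t) (k := k) (n := n) hα ht
      have hnum := numeric_k hk
      have h16 : (0:ℝ) < (16:ℝ)^k := by positivity
      calc B ≤ Real.exp 1 ^ (k-2) * (α*(n:ℝ)/(2*(t:ℝ))) * ((3*(k:ℝ)*(t:ℝ))/(n:ℝ))^3 := by
            rw [hB_def]
            gcongr <;> first
              | exact hms
              | exact hw3kt
              | positivity
        _ = (27 * (k:ℝ)^3 * Real.exp 1 ^ (k-2)) * (α * (t:ℝ)^2) / (2*(n:ℝ)^2) := by
            have htne : (t:ℝ) ≠ 0 := by positivity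
            rw [div_pow]
            field_simp
            ring
        _ ≤ 1/2 := by
            rw [div_le_iff₀ (by positivity)]
            have key : (27 * (k:ℝ)^3 * Real.exp 1 ^ (k-2)) * (α * (t:ℝ)^2) ≤ (n:ℝ)^2 := by
              have hαt : α * (t:ℝ)^2 * (16:ℝ)^k ≤ (n:ℝ)^2 := by linear_combination hsq
              have t0 : (0:ℝ) ≤ α * (t:ℝ)^2 := by positivity
              calc (27 * (k:ℝ)^3 * Real.exp 1 ^ (k-2)) * (α * (t:ℝ)^2)
                  ≤ (16:ℝ)^k * (α * (t:ℝ)^2) := mul_le_mul_of_nonneg_right hnum t0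
                _ ≤ (n:ℝ)^2 := by linear_combination hαt
            linarith [key]
  -- Step 7: final
  have hw3k1 : (w:ℝ) ≤ 3*(k:ℝ)*((t:ℝ)+1) := by
    have hnat : w ≤ 3*k*(t+1) := by
      have hb1 : (k-6)*(t+1) ≤ k*(t+1) := Nat.mul_le_mul_right _ (by omega)
      have hb2 : k*t ≤ k*(t+1) := Nat.mul_le_mul_left _ (by omega)
      have hb3 : 3*k*(t+1) = k*(t+1) + k*(t+1) + k*(t+1) := by ring
      omega
    have := (Nat.cast_le (α := ℝ)).mpr hnat
    push_cast at this
    linarith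
  calc (m.choose s : ℝ) * (n.choose w : ℝ) * ((w:ℝ)/(n:ℝ))^(k*s)
      ≤ B^s * ((w:ℝ)/(n:ℝ))^3 := ((step1.trans_eq step2).trans step3).trans_eq step4
    _ ≤ (1/2:ℝ)^s * ((3*(k:ℝ)*((t:ℝ)+1))/(n:ℝ))^3 := by
        gcongr <;> first
          | exact hBnn
          | exact hB
          | exact hw3k1
          | positivity


end AuxiliaryLemmas

set_option maxHeartbeats 1000000 in
/-- The peeling property: with probability `1 - o(1/n)`, for any
small set `E'` of hyperedges, any sequence of distinct further hyperedges each meeting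
the previously covered vertices in at least `6` vertices has length at most `|E'|`. -/
theorem statement16 :
    ∀ (k q : ℕ) (α : ℝ), 12 ≤ k → 2 ≤ q → α ≤ (q : ℝ) ^ k →
      Filter.Tendsto
        (fun n : ℕ =>
          (n : ℝ) *
            pr (Formula k n ⌊α * (n : ℝ)⌋₊) fun Φ =>
              ¬ ∀ E' : Finset (Fin ⌊α * (n : ℝ)⌋₊),
                  (E'.card : ℝ) ≤ ((4 : ℝ) ^ k)⁻¹ * (Real.sqrt α)⁻¹ * (n : ℝ) →
                  ∀ (ℓ : ℕ) (f : Fin ℓ → Fin ⌊α * (n : ℝ)⌋₊),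
                    Function.Injective f →
                    (∀ s, f s ∉ E') →
                    (∀ s : Fin ℓ,
                      6 ≤ ((vbl Φ (f s)) ∩
                          (E'.biUnion (vbl Φ) ∪
                            (Finset.univ.filter fun j : Fin ℓ => j < s).biUnion
                              fun j => vbl Φ (f j))).card) →
                    ℓ ≤ E'.card)
        Filter.atTop (nhds 0) := by
  intro k q α hk hq hαq
  rcases le_or_gt α 0 with hα0 | hα0
  · -- degenerate case: no clauses at all
    have hzero : ∀ n : ℕ, (n : ℝ) *
        pr (Formula k n ⌊α * (n : ℝ)⌋₊) (fun Φ =>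
          ¬ ∀ E' : Finset (Fin ⌊α * (n : ℝ)⌋₊),
              (E'.card : ℝ) ≤ ((4 : ℝ) ^ k)⁻¹ * (Real.sqrt α)⁻¹ * (n : ℝ) →
              ∀ (ℓ : ℕ) (f : Fin ℓ → Fin ⌊α * (n : ℝ)⌋₊),
                Function.Injective f →
                (∀ s, f s ∉ E') →
                (∀ s : Fin ℓ,
                  6 ≤ ((vbl Φ (f s)) ∩
                      (E'.biUnion (vbl Φ) ∪
                        (Finset.univ.filter fun j : Fin ℓ => j < s).biUnion
                          fun j => vbl Φ (f j))).card) →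
                ℓ ≤ E'.card) = 0 := by
      intro n
      have hm0 : ⌊α * (n : ℝ)⌋₊ = 0 :=
        Nat.floor_of_nonpos (mul_nonpos_of_nonpos_of_nonneg hα0 (Nat.cast_nonneg n))
      rw [pr_eq_zero, mul_zero]
      intro Φ hΦ
      apply hΦ
      intro E' _ ℓ f _ _ _
      by_contra hcon
      have hℓ : 0 < ℓ := by omega
      have hi := (f ⟨0, hℓ⟩).isLt
      omega
    have heq : (fun n : ℕ => (n : ℝ) * pr (Formula k n ⌊α * (n : ℝ)⌋₊) _) = fun _ : ℕ => (0:ℝ) :=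
      funext hzero
    rw [heq]
    exact tendsto_const_nhds
  · -- main case
    have htendn2 : Filter.Tendsto (fun n : ℕ => ((n:ℝ))^2) Filter.atTop Filter.atTop :=
      (tendsto_pow_atTop (by norm_num : 2 ≠ 0)).comp tendsto_natCast_atTop_atTop
    apply squeeze_zero' (g := fun n : ℕ => (216 * (k:ℝ)^3) / (n:ℝ)^2)
    · exact Filter.Eventually.of_forall
        (fun n => mul_nonneg (Nat.cast_nonneg n) (pr_nonneg _))
    · have F1 : ∀ᶠ n : ℕ in Filter.atTop, 1 ≤ n := Filter.eventually_ge_atTop 1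
      have F2 : ∀ᶠ n : ℕ in Filter.atTop, 4 * k ≤ n := Filter.eventually_ge_atTop _
      have F3 : ∀ᶠ n : ℕ in Filter.atTop,
          Real.exp 1 ^ (k-2) * α * ((k:ℝ)-6)^3 * 2 ≤ (n:ℝ)^2 :=
        htendn2.eventually_ge_atTop _
      filter_upwards [F1, F2, F3] with n hn1 hn4k hB0
      classical
      set m := ⌊α * (n : ℝ)⌋₊ with hm_def
      have hm : (m:ℝ) ≤ α * n := Nat.floor_le (by positivity)
      have hn0 : (0:ℝ) < (n:ℝ) := by exact_mod_cast hn1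
      set Tf : Finset ℕ := (Finset.range (m+1)).filter
        (fun t => (t:ℝ) ≤ ((4:ℝ)^k)⁻¹ * (Real.sqrt α)⁻¹ * n) with hTf
      set I : Finset ((_ : ℕ) × (Finset (Fin m) × Finset (Fin n))) :=
        Tf.sigma (fun t => (Finset.univ.powersetCard (2*t+1)) ×ˢ
          (Finset.univ.powersetCard (k*t+(k-6)*(t+1)))) with hI
      have hub : pr (Formula k n m) (fun Φ =>
          ¬ ∀ E' : Finset (Fin m),
              (E'.card : ℝ) ≤ ((4 : ℝ) ^ k)⁻¹ * (Real.sqrt α)⁻¹ * (n : ℝ) →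
              ∀ (ℓ : ℕ) (f : Fin ℓ → Fin m),
                Function.Injective f →
                (∀ s, f s ∉ E') →
                (∀ s : Fin ℓ,
                  6 ≤ ((vbl Φ (f s)) ∩
                      (E'.biUnion (vbl Φ) ∪
                        (Finset.univ.filter fun j : Fin ℓ => j < s).biUnion
                          fun j => vbl Φ (f j))).card) →
                ℓ ≤ E'.card)
          ≤ ∑ p ∈ I, pr (Formula k n m)
              (fun Φ => ∀ i ∈ p.2.1, ∀ j, (Φ i j).1 ∈ p.2.2) := by
        apply pr_le_sum
        intro Φ hΦ
        push_neg at hΦ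
        obtain ⟨E', hE'card, ℓ, f, hinj, havoid, hpeel, hlt⟩ := hΦ
        obtain ⟨S, hScard, U, hUcard, hmemU⟩ := exists_witness hk Φ E' ℓ f hinj havoid hpeel hlt
        have htm : E'.card ≤ m := by
          have := Finset.card_le_univ E'
          simpa using this
        have hsm : 2 * E'.card + 1 ≤ m := by
          have := Finset.card_le_univ S
          rw [hScard] at this
          simpa using this
        have h8kt : 8 * k * E'.card ≤ n := t_small hk hα0 hm hE'card hsm
        have hwn : k * E'.card + (k-6) * (E'.card+1) ≤ n := by
          have hb2 : (k-6) * (E'.card+1) ≤ k * E'.card + k := by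
            have h2 : (k-6) * E'.card ≤ k * E'.card := Nat.mul_le_mul_right _ (by omega)
            have h3 : (k-6) * (E'.card+1) = (k-6) * E'.card + (k-6) := by ring
            omega
          have h8kt' : 8 * (k * E'.card) ≤ n := by rw [← mul_assoc]; exact h8kt
          omega
        obtain ⟨W, hUW, _, hWcard⟩ := Finset.exists_subsuperset_card_eq
          (Finset.subset_univ U) hUcard (by simpa using hwn)
        refine ⟨⟨E'.card, (S, W)⟩, ?_, ?_⟩
        · rw [hI, Finset.mem_sigma]
          refine ⟨?_, ?_⟩
          · rw [hTf, Finset.mem_filter, Finset.mem_range]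
            refine ⟨?_, hE'card⟩
            show E'.card < m + 1
            omega
          · rw [Finset.mem_product]
            exact ⟨Finset.mem_powersetCard.mpr ⟨Finset.subset_univ _, hScard⟩,
              Finset.mem_powersetCard.mpr ⟨Finset.subset_univ _, hWcard⟩⟩
        · intro i hi j
          exact hUW (hmemU i hi j)
      have hsum : ∑ p ∈ I, pr (Formula k n m)
            (fun Φ => ∀ i ∈ p.2.1, ∀ j, (Φ i j).1 ∈ p.2.2)
          ≤ ∑ t ∈ Tf, (m.choose (2*t+1) : ℝ) * (n.choose (k*t+(k-6)*(t+1)) : ℝ)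
              * (((k*t+(k-6)*(t+1) : ℕ):ℝ)/(n:ℝ))^(k*(2*t+1)) := by
        rw [hI, Finset.sum_sigma]
        apply Finset.sum_le_sum
        intro t _
        rw [Finset.sum_product]
        have hinner : ∀ S ∈ Finset.univ.powersetCard (2*t+1),
            ∀ W ∈ Finset.univ.powersetCard (k*t+(k-6)*(t+1)),
            pr (Formula k n m) (fun Φ => ∀ i ∈ S, ∀ j, (Φ i j).1 ∈ W)
              ≤ (((k*t+(k-6)*(t+1) : ℕ):ℝ)/(n:ℝ))^(k*(2*t+1)) := by
          intro S hS W hW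
          rw [Finset.mem_powersetCard] at hS hW
          have := prQ (k := k) (by omega : 0 < n) S W
          rw [hS.2, hW.2] at this
          exact this
        calc ∑ S ∈ Finset.univ.powersetCard (2*t+1),
              ∑ W ∈ Finset.univ.powersetCard (k*t+(k-6)*(t+1)),
                pr (Formula k n m) (fun Φ => ∀ i ∈ S, ∀ j, (Φ i j).1 ∈ W)
            ≤ ∑ S ∈ Finset.univ.powersetCard (2*t+1),
              ∑ _W ∈ Finset.univ.powersetCard (k*t+(k-6)*(t+1)),
                (((k*t+(k-6)*(t+1) : ℕ):ℝ)/(n:ℝ))^(k*(2*t+1)) :=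
              Finset.sum_le_sum (fun S hS =>
                Finset.sum_le_sum (fun W hW => hinner S hS W hW))
          _ = (m.choose (2*t+1) : ℝ) * (n.choose (k*t+(k-6)*(t+1)) : ℝ)
              * (((k*t+(k-6)*(t+1) : ℕ):ℝ)/(n:ℝ))^(k*(2*t+1)) := by
              rw [Finset.sum_const, Finset.sum_const, Finset.card_powersetCard,
                Finset.card_powersetCard]
              simp [smul_smul, mul_assoc]
      have hterm : ∀ t ∈ Tf, (m.choose (2*t+1) : ℝ) * (n.choose (k*t+(k-6)*(t+1)) : ℝ)
            * (((k*t+(k-6)*(t+1) : ℕ):ℝ)/(n:ℝ))^(k*(2*t+1))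
          ≤ (1/2:ℝ)^(2*t+1) * ((3*(k:ℝ)*((t:ℝ)+1))/(n:ℝ))^3 := by
        intro t htf
        rw [hTf, Finset.mem_filter] at htf
        exact termBound hk hα0 hn1 hm htf.2 hB0
      have hgeom : ∑ t ∈ Tf, (1/2:ℝ)^(2*t+1) * ((3*(k:ℝ)*((t:ℝ)+1))/(n:ℝ))^3
          ≤ (216 * (k:ℝ)^3) / (n:ℝ)^3 := by
        calc ∑ t ∈ Tf, (1/2:ℝ)^(2*t+1) * ((3*(k:ℝ)*((t:ℝ)+1))/(n:ℝ))^3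
            ≤ ∑ t ∈ Finset.range (m+1), (1/2:ℝ)^(2*t+1) * ((3*(k:ℝ)*((t:ℝ)+1))/(n:ℝ))^3 := by
              apply Finset.sum_le_sum_of_subset_of_nonneg (Finset.filter_subset _ _)
              intro t _ _
              positivity
          _ ≤ ∑ t ∈ Finset.range (m+1), (27 * (k:ℝ)^3 / (n:ℝ)^3) * (4 * (1/2:ℝ)^t) := by
              apply Finset.sum_le_sum
              intro t _
              have hc : ((t:ℝ)+1)^3 ≤ 8 * 2^t := by
                have := (Nat.cast_le (α := ℝ)).mpr (cube_le t)
                push_cast at this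
                linarith
              have hhalf : (1/2:ℝ)^(2*t+1) * ((t:ℝ)+1)^3 ≤ 4 * (1/2:ℝ)^t := by
                have hexp : (1/2:ℝ)^(2*t+1) = (1/2) * ((1/4:ℝ))^t := by
                  rw [pow_succ', pow_mul]
                  norm_num
                rw [hexp]
                have h4 : ((1/4:ℝ))^t * (2:ℝ)^t = (1/2:ℝ)^t := by
                  rw [← mul_pow]
                  norm_num
                calc (1/2) * ((1/4:ℝ))^t * ((t:ℝ)+1)^3
                    ≤ (1/2) * ((1/4:ℝ))^t * (8 * 2^t) := by
                      apply mul_le_mul_of_nonneg_left hc (by positivity)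
                  _ = 4 * (((1/4:ℝ))^t * (2:ℝ)^t) := by ring
                  _ = 4 * (1/2:ℝ)^t := by rw [h4]
              calc (1/2:ℝ)^(2*t+1) * ((3*(k:ℝ)*((t:ℝ)+1))/(n:ℝ))^3
                  = (27 * (k:ℝ)^3 / (n:ℝ)^3) * ((1/2:ℝ)^(2*t+1) * ((t:ℝ)+1)^3) := by
                    rw [div_pow]
                    ring
                _ ≤ (27 * (k:ℝ)^3 / (n:ℝ)^3) * (4 * (1/2:ℝ)^t) := by
                    apply mul_le_mul_of_nonneg_left hhalf (by positivity)
          _ = (27 * (k:ℝ)^3 / (n:ℝ)^3) * 4 * ∑ t ∈ Finset.range (m+1), (1/2:ℝ)^t := by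
              rw [Finset.mul_sum]
              apply Finset.sum_congr rfl
              intro t _
              ring
          _ ≤ (27 * (k:ℝ)^3 / (n:ℝ)^3) * 4 * 2 := by
              apply mul_le_mul_of_nonneg_left (sum_geometric_two_le _) (by positivity)
          _ = (216 * (k:ℝ)^3) / (n:ℝ)^3 := by ring
      have hfinal : pr (Formula k n m) (fun Φ =>
          ¬ ∀ E' : Finset (Fin m),
              (E'.card : ℝ) ≤ ((4 : ℝ) ^ k)⁻¹ * (Real.sqrt α)⁻¹ * (n : ℝ) →
              ∀ (ℓ : ℕ) (f : Fin ℓ → Fin m),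
                Function.Injective f →
                (∀ s, f s ∉ E') →
                (∀ s : Fin ℓ,
                  6 ≤ ((vbl Φ (f s)) ∩
                      (E'.biUnion (vbl Φ) ∪
                        (Finset.univ.filter fun j : Fin ℓ => j < s).biUnion
                          fun j => vbl Φ (f j))).card) →
                ℓ ≤ E'.card)
          ≤ (216 * (k:ℝ)^3) / (n:ℝ)^3 :=
        hub.trans (hsum.trans ((Finset.sum_le_sum hterm).trans hgeom))
      calc (n:ℝ) * pr (Formula k n m) _
          ≤ (n:ℝ) * ((216 * (k:ℝ)^3) / (n:ℝ)^3) :=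
            mul_le_mul_of_nonneg_left hfinal (Nat.cast_nonneg n)
        _ = (216 * (k:ℝ)^3) / (n:ℝ)^2 := by
            field_simp
    · exact Filter.Tendsto.div_atTop tendsto_const_nhds htendn2


end RCSP
end
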